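/- Let q be a prime with q ≡ 3 (mod 4) and q ≥ 7. Then the alternating group A_q on q letters contains a subgroup H of order q(q−1)/2 whose induced action on the set of 2-element subsets of {1, …, q} is transitive (and hence regular, since this set has exactly q(q−1)/2 elements). In particular, A_q acting on 2-element subsets has a proper transitive subgroup, so the socle A_q in this uniprimitive action of degree q(q−1)/2 is not minimal transitive. -/

import Mathlib

open Equiv Equiv.Perm

section Aux

variable {q : ℕ} [Fact q.Prime]

/-- The affine permutation `x ↦ a * x + b` of `ZMod q`. -/
def affPerm (a : (ZMod q)ˣ) (b : ZMod q) : Equiv.Perm (ZMod q) :=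
  (Equiv.mulLeft₀ (a : ZMod q) a.ne_zero).trans (Equiv.addLeft b)

lemma affPerm_apply (a : (ZMod q)ˣ) (b : ZMod q) (x : ZMod q) :
    affPerm a b x = (a : ZMod q) * x + b := by
  simp [affPerm, add_comm]

/-- Subgroup of affine maps with square multiplier. -/
def affSq (q : ℕ) [Fact q.Prime] : Subgroup (Equiv.Perm (ZMod q)) where
  carrier := {π | ∃ a : (ZMod q)ˣ, IsSquare a ∧ ∃ b : ZMod q, ∀ x, π x = (a : ZMod q) * x + b}
  one_mem' := ⟨1, IsSquare.one, 0, by simp⟩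
  mul_mem' := by
    rintro π σ ⟨a, ha, b, hab⟩ ⟨c, hc, d, hcd⟩
    refine ⟨a * c, ha.mul hc, (a : ZMod q) * d + b, fun x => ?_⟩
    simp only [Equiv.Perm.mul_apply, hab, hcd]
    push_cast
    ring
  inv_mem' := by
    rintro π ⟨a, ha, b, hab⟩
    refine ⟨a⁻¹, ?_, -((a⁻¹ : (ZMod q)ˣ) : ZMod q) * b, fun x => ?_⟩
    · obtain ⟨c, hc⟩ := ha
      exact ⟨c⁻¹, by rw [hc, mul_inv_rev]⟩
    · apply π.injective
      rw [Equiv.Perm.inv_def, Equiv.apply_symm_apply, hab]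
      have : ((a : (ZMod q)ˣ) : ZMod q) * ((a⁻¹ : (ZMod q)ˣ) : ZMod q) = 1 := by
        rw [← Units.val_mul, mul_inv_cancel, Units.val_one]
      linear_combination (b - x) * this

lemma sign_affSq (hq2 : q ≠ 2) {π : Equiv.Perm (ZMod q)} (hπ : π ∈ affSq q) :
    Equiv.Perm.sign π = 1 := by
  obtain ⟨a, ⟨c, hc⟩, b, hab⟩ := hπ
  have h2 : (2 : ZMod q) ≠ 0 := by
    have : ((2 : ℕ) : ZMod q) ≠ 0 := by
      rw [Ne, ZMod.natCast_eq_zero_iff]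
      exact fun h => hq2 ((Nat.prime_dvd_prime_iff_eq Fact.out Nat.prime_two).mp h)
    simpa using this
  set ρ : Equiv.Perm (ZMod q) := Equiv.addLeft (b / 2) with hρ
  set τ : Equiv.Perm (ZMod q) := Equiv.mulLeft₀ ((c : (ZMod q)ˣ) : ZMod q) c.ne_zero with hτ
  have claim : π = ρ * ρ * τ * τ := by
    ext x
    simp only [Equiv.Perm.mul_apply, hab, hρ, hτ, Equiv.coe_addLeft, hc]
    simp only [Equiv.mulLeft₀_apply]
    push_cast
    field_simp
    ring
  rw [claim, map_mul, map_mul, map_mul, Int.units_mul_self, one_mul, Int.units_mul_self]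

lemma card_affSq (hq2 : q ≠ 2) (hodd : q % 2 = 1) : Nat.card (affSq q) = (q - 1) / 2 * q := by
  classical
  -- affSq ≃ squares × ZMod q
  have key : Nat.card (affSq q) = Nat.card ({a : (ZMod q)ˣ // IsSquare a} × ZMod q) := by
    refine (Nat.card_congr (Equiv.symm (Equiv.ofBijective
      (fun p : {a : (ZMod q)ˣ // IsSquare a} × ZMod q =>
        (⟨affPerm p.1.1 p.2, ⟨p.1.1, p.1.2, p.2, affPerm_apply _ _⟩⟩ : affSq q)) ⟨?_, ?_⟩)))
    · rintro ⟨⟨a, ha⟩, b⟩ ⟨⟨a', ha'⟩, b'⟩ h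
      simp only [Subtype.mk.injEq] at h
      have h0 := congrArg (fun π : affSq q => (π : Equiv.Perm (ZMod q)) 0) h
      have h1 := congrArg (fun π : affSq q => (π : Equiv.Perm (ZMod q)) 1) h
      simp only [affPerm_apply, mul_zero, zero_add, mul_one] at h0 h1
      have haa : a = a' := Units.ext (by linear_combination h1 - h0)
      simp [h0, haa]
    · rintro ⟨π, a, ha, b, hab⟩
      refine ⟨⟨⟨a, ha⟩, b⟩, ?_⟩
      ext x
      exact ((affPerm_apply a b x).trans (hab x).symm)
  rw [key, Nat.card_prod, Nat.card_zmod]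
  congr 1
  -- number of squares in the unit group
  have hker : Nat.card (MonoidHom.ker (powMonoidHom 2 : (ZMod q)ˣ →* (ZMod q)ˣ)) = 2 := by
    rw [Nat.card_eq_two_iff]
    have hm1 : ((-1 : (ZMod q)ˣ)) ∈ MonoidHom.ker (powMonoidHom 2 : (ZMod q)ˣ →* (ZMod q)ˣ) := by
      simp [MonoidHom.mem_ker, powMonoidHom_apply]
    have h1 : ((1 : (ZMod q)ˣ)) ∈ MonoidHom.ker (powMonoidHom 2 : (ZMod q)ˣ →* (ZMod q)ˣ) := by
      simp [MonoidHom.mem_ker]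
    have hne : ((1 : (ZMod q)ˣ) : ZMod q) ≠ ((-1 : (ZMod q)ˣ) : ZMod q) := by
      simp only [Units.val_one, Units.val_neg]
      intro h
      have h2 : ((2 : ℕ) : ZMod q) = 0 := by push_cast; linear_combination h
      rw [ZMod.natCast_eq_zero_iff] at h2
      exact hq2 ((Nat.prime_dvd_prime_iff_eq Fact.out Nat.prime_two).mp h2)
    refine ⟨⟨1, h1⟩, ⟨-1, hm1⟩, by simpa using fun h => hne (congrArg Units.val h), ?_⟩
    ext ⟨z, hz⟩
    simp only [Set.mem_insert_iff, Set.mem_singleton_iff, Set.mem_univ, iff_true]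
    rw [MonoidHom.mem_ker, powMonoidHom_apply] at hz
    have hz' : (z : ZMod q) * (z : ZMod q) = 1 := by
      have := congrArg Units.val hz
      push_cast at this
      linear_combination this
    rcases mul_self_eq_one_iff.mp hz' with h | h
    · left; exact Subtype.ext (Units.ext h)
    · right; exact Subtype.ext (Units.ext (by simpa using h))
  have hcards : Nat.card (ZMod q)ˣ =
      Nat.card ((ZMod q)ˣ ⧸ MonoidHom.ker (powMonoidHom 2 : (ZMod q)ˣ →* (ZMod q)ˣ)) *
        Nat.card (MonoidHom.ker (powMonoidHom 2 : (ZMod q)ˣ →* (ZMod q)ˣ)) :=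
    Subgroup.card_eq_card_quotient_mul_card_subgroup _
  have hrange : Nat.card {a : (ZMod q)ˣ // IsSquare a} =
      Nat.card ((ZMod q)ˣ ⧸ MonoidHom.ker (powMonoidHom 2 : (ZMod q)ˣ →* (ZMod q)ˣ)) := by
    refine Nat.card_congr (Equiv.trans (Equiv.subtypeEquivRight fun a => ?_)
      (Equiv.symm (QuotientGroup.quotientKerEquivRange _).toEquiv))
    constructor
    · rintro ⟨r, hr⟩; exact ⟨r, by simp [powMonoidHom_apply, pow_two, hr.symm]⟩
    · rintro ⟨r, hr⟩; exact ⟨r, by rw [← hr]; simp [powMonoidHom_apply, pow_two]⟩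
  have hu : Nat.card (ZMod q)ˣ = q - 1 := by
    rw [Nat.card_eq_fintype_card, ZMod.card_units]
  rw [hker] at hcards
  rw [hrange]
  omega

lemma trans_affSq (hq2 : q ≠ 2) (hq4 : q % 4 = 3) (s t : Finset (ZMod q))
    (hs : s.card = 2) (ht : t.card = 2) :
    ∃ π ∈ affSq q, s.image ⇑π = t := by
  classical
  obtain ⟨x, y, hxy, rfl⟩ := Finset.card_eq_two.mp hs
  obtain ⟨u, v, huv, rfl⟩ := Finset.card_eq_two.mp ht
  have hyx : y - x ≠ 0 := sub_ne_zero.mpr (Ne.symm hxy)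
  have hvu : v - u ≠ 0 := sub_ne_zero.mpr (Ne.symm huv)
  set r : ZMod q := (v - u) / (y - x) with hr
  have hr0 : r ≠ 0 := div_ne_zero hvu hyx
  have hrmul : r * (y - x) = v - u := div_mul_cancel₀ _ hyx
  have hchar : ringChar (ZMod q) ≠ 2 := by
    rw [ZMod.ringChar_zmod_n]; exact hq2
  -- one of r, -r is a square
  have key : ∃ a : ZMod q, a ≠ 0 ∧ IsSquare a ∧ (a = r ∨ a = -r) := by
    by_cases hsq : IsSquare r
    · exact ⟨r, hr0, hsq, Or.inl rfl⟩
    · refine ⟨-r, neg_ne_zero.mpr hr0, ?_, Or.inr rfl⟩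
      have hm1 : ¬ IsSquare (-1 : ZMod q) := by
        rw [ZMod.exists_sq_eq_neg_one_iff]; simp [hq4]
      have c1 : quadraticChar (ZMod q) (-1) = -1 :=
        (quadraticChar_neg_one_iff_not_isSquare).mpr hm1
      have cr : quadraticChar (ZMod q) r = -1 :=
        (quadraticChar_neg_one_iff_not_isSquare).mpr hsq
      have : quadraticChar (ZMod q) (-r) = 1 := by
        rw [show (-r : ZMod q) = -1 * r by ring, map_mul, c1, cr]; ring
      exact (quadraticChar_one_iff_isSquare (neg_ne_zero.mpr hr0)).mp this
  obtain ⟨a, ha0, ⟨c, hc⟩, hra⟩ := key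
  have hc0 : c ≠ 0 := fun h => ha0 (by rw [hc, h, mul_zero])
  set B : ZMod q := if a = r then u - a * x else v - a * x with hB
  refine ⟨affPerm (Units.mk0 a ha0) B,
    ⟨Units.mk0 a ha0, ⟨Units.mk0 c hc0, Units.ext (by simp [hc])⟩, B,
      fun z => affPerm_apply _ _ z⟩, ?_⟩
  rcases hra with h | h
  · have hBe : B = u - a * x := by rw [hB, if_pos h]
    have hx : affPerm (Units.mk0 a ha0) B x = u := by
      rw [affPerm_apply, hBe]; simp only [Units.val_mk0]; ring
    have hy : affPerm (Units.mk0 a ha0) B y = v := by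
      rw [affPerm_apply, hBe]; simp only [Units.val_mk0, h]; linear_combination hrmul
    rw [Finset.image_insert, Finset.image_singleton, hx, hy]
  · have hne : a ≠ r := by
      rw [h]; intro hh
      have h20 : (2 : ZMod q) * r = 0 := by linear_combination -hh
      rcases mul_eq_zero.mp h20 with h2 | h2
      · have h2' : ((2 : ℕ) : ZMod q) = 0 := by push_cast; exact h2
        rw [ZMod.natCast_eq_zero_iff] at h2'
        exact hq2 ((Nat.prime_dvd_prime_iff_eq Fact.out Nat.prime_two).mp h2')
      · exact hr0 h2
    have hBe : B = v - a * x := by rw [hB, if_neg hne]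
    have hx : affPerm (Units.mk0 a ha0) B x = v := by
      rw [affPerm_apply, hBe]; simp only [Units.val_mk0]; ring
    have hy : affPerm (Units.mk0 a ha0) B y = u := by
      rw [affPerm_apply, hBe]; simp only [Units.val_mk0, h]; linear_combination -hrmul
    rw [Finset.image_insert, Finset.image_singleton, hx, hy, Finset.pair_comm]

/-- `permCongr` as a monoid hom. -/
def permCongrHom {α β : Type*} (e : α ≃ β) : Equiv.Perm α →* Equiv.Perm β where
  toFun := e.permCongr
  map_one' := by ext x; simp
  map_mul' f g := by ext x; simp [Equiv.permCongr_apply]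

end Aux

theorem alternating_socle_not_minimal_transitive
    {q : ℕ} (hq : q.Prime) (hq4 : q % 4 = 3) (hq7 : 7 ≤ q) :
    ∃ H : Subgroup (alternatingGroup (Fin q)),
      Nat.card H = q * (q - 1) / 2 ∧
      ∀ s t : Finset (Fin q), s.card = 2 → t.card = 2 →
        ∃ σ ∈ H, Finset.image (⇑(σ : Equiv.Perm (Fin q))) s = t := by
  classical
  haveI := Fact.mk hq
  have hq2 : q ≠ 2 := by omega
  let e : ZMod q ≃ Fin q := Fintype.equivFinOfCardEq (ZMod.card q)
  let φ : Equiv.Perm (ZMod q) →* Equiv.Perm (Fin q) := _root_.permCongrHom e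
  have hφinj : Function.Injective φ := fun f g h => (Equiv.permCongr e).injective h
  have hle : (affSq q).map φ ≤ alternatingGroup (Fin q) := by
    rintro _ ⟨π, hπ, rfl⟩
    rw [Equiv.Perm.mem_alternatingGroup]
    show Equiv.Perm.sign (e.permCongr π) = 1
    rw [Equiv.Perm.sign_permCongr]
    exact sign_affSq hq2 hπ
  refine ⟨((affSq q).map φ).subgroupOf (alternatingGroup (Fin q)), ?_, ?_⟩
  · have e1 : Nat.card (((affSq q).map φ).subgroupOf (alternatingGroup (Fin q))) =
        Nat.card ((affSq q).map φ) :=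
      Nat.card_congr (Subgroup.subgroupOfEquivOfLe hle).toEquiv
    have e2 : Nat.card ((affSq q).map φ) = Nat.card (affSq q) :=
      Nat.card_congr (Subgroup.equivMapOfInjective _ _ hφinj).toEquiv.symm
    rw [e1, e2, card_affSq hq2 (by omega)]
    obtain ⟨k, hk⟩ : ∃ k, q - 1 = 2 * k := ⟨(q - 1) / 2, by omega⟩
    rw [hk, Nat.mul_div_cancel_left k two_pos,
      show q * (2 * k) = k * q * 2 by ring, Nat.mul_div_cancel _ two_pos]
  · intro s t hs ht
    have hs' : (s.image ⇑e.symm).card = 2 := by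
      rw [Finset.card_image_of_injective _ e.symm.injective, hs]
    have ht' : (t.image ⇑e.symm).card = 2 := by
      rw [Finset.card_image_of_injective _ e.symm.injective, ht]
    obtain ⟨π, hπ, himg⟩ := trans_affSq hq2 hq4 _ _ hs' ht'
    refine ⟨⟨φ π, hle ⟨π, hπ, rfl⟩⟩, Subgroup.mem_subgroupOf.mpr ⟨π, hπ, rfl⟩, ?_⟩
    have : (⇑(φ π) : Fin q → Fin q) = ⇑e ∘ ⇑π ∘ ⇑e.symm := rfl
    rw [Subgroup.coe_mk, this, ← Function.comp_assoc, ← Finset.image_image,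
      ← Finset.image_image, himg, Finset.image_image]
    simp
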